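/- Let U be a real vector space, let S ⊆ U be a set, and let K = {Σ_{i=1}^n α_i s_i | n finite, α_i ≥ 0, s_i ∈ S} be the cone of finite nonnegative combinations of elements of S. Suppose K is full-dimensional in the sense that U = K − K = {y − z | y, z ∈ K}. Suppose x ∈ K is such that for every s ∈ S there exists t_s > 0 such that x − t·s ∈ K for all t ∈ [0, t_s]. Then x belongs to the core of K, i.e., for every z ∈ U there exists t_z > 0 such that x + t·z ∈ K for all t ∈ [0, t_z]. -/

import Mathlib

def genCone {U : Type*} [AddCommGroup U] [Module ℝ U] (S : Set U) : Set U :=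
  {x : U | ∃ (n : ℕ) (α : Fin n → ℝ) (s : Fin n → U),
      (∀ i, 0 ≤ α i) ∧ (∀ i, s i ∈ S) ∧ x = ∑ i, α i • s i}

lemma genCone_zero {U : Type*} [AddCommGroup U] [Module ℝ U] (S : Set U) :
    (0 : U) ∈ genCone S := by
  exact ⟨0, Fin.elim0, Fin.elim0, fun i => i.elim0, fun i => i.elim0, by simp⟩

lemma genCone_add {U : Type*} [AddCommGroup U] [Module ℝ U] {S : Set U} {a b : U}
    (ha : a ∈ genCone S) (hb : b ∈ genCone S) : a + b ∈ genCone S := by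
  obtain ⟨n, α, s, hα, hs, rfl⟩ := ha
  obtain ⟨m, β, r, hβ, hr, rfl⟩ := hb
  refine ⟨n + m, Fin.append α β, Fin.append s r, ?_, ?_, ?_⟩
  · intro i
    refine i.addCases (fun j => ?_) (fun j => ?_) <;>
      simp [Fin.append_left, Fin.append_right, hα, hβ]
  · intro i
    refine i.addCases (fun j => ?_) (fun j => ?_) <;>
      simp [Fin.append_left, Fin.append_right, hs _, hr _]
  · rw [Fin.sum_univ_add]
    simp [Fin.append_left, Fin.append_right]

lemma genCone_smul {U : Type*} [AddCommGroup U] [Module ℝ U] {S : Set U} {a : U} {c : ℝ}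
    (hc : 0 ≤ c) (ha : a ∈ genCone S) : c • a ∈ genCone S := by
  obtain ⟨n, α, s, hα, hs, rfl⟩ := ha
  refine ⟨n, fun i => c * α i, s, fun i => mul_nonneg hc (hα i), hs, ?_⟩
  rw [Finset.smul_sum]
  simp [smul_smul]

lemma genCone_sum {U : Type*} [AddCommGroup U] [Module ℝ U] {S : Set U} {n : ℕ}
    {f : Fin n → U} (hf : ∀ i, f i ∈ genCone S) : ∑ i, f i ∈ genCone S := by
  induction n with
  | zero => simpa using genCone_zero S
  | succ m ih =>
    rw [Fin.sum_univ_succ]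
    exact genCone_add (hf 0) (ih fun i => hf i.succ)

theorem mem_core_of_generators
    {U : Type*} [AddCommGroup U] [Module ℝ U]
    (S : Set U)
    (K : Set U)
    (hK : K = {x : U | ∃ (n : ℕ) (α : Fin n → ℝ) (s : Fin n → U),
        (∀ i, 0 ≤ α i) ∧ (∀ i, s i ∈ S) ∧ x = ∑ i, α i • s i})
    (hfull : ∀ u : U, ∃ y ∈ K, ∃ z ∈ K, u = y - z)
    (x : U) (hx : x ∈ K)
    (hgen : ∀ s ∈ S, ∃ ts > (0 : ℝ), ∀ t ∈ Set.Icc (0 : ℝ) ts, x - t • s ∈ K) :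
    ∀ z : U, ∃ tz > (0 : ℝ), ∀ t ∈ Set.Icc (0 : ℝ) tz, x + t • z ∈ K := by
  have hK' : K = genCone S := hK
  subst hK'
  intro z
  obtain ⟨y, hy, w, hw, hz⟩ := hfull z
  obtain ⟨n, α, s, hα, hs, rfl⟩ := hw
  -- first show: for small t, x - t • (∑ α i • s i) ∈ genCone S
  have hsub : ∃ tz > (0 : ℝ), ∀ t ∈ Set.Icc (0 : ℝ) tz,
      x - t • (∑ i, α i • s i) ∈ genCone S := by
    rcases Nat.eq_zero_or_pos n with hn | hn
    · subst hn
      exact ⟨1, one_pos, fun t ht => by simpa using hx⟩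
    · choose ts hts hmem using fun i : Fin n => hgen (s i) (hs i)
      haveI : Nonempty (Fin n) := Fin.pos_iff_nonempty.mp hn
      have hne : (Finset.univ : Finset (Fin n)).Nonempty := Finset.univ_nonempty
      set tz := Finset.univ.inf' hne (fun i => ts i / ((n : ℝ) * (α i + 1))) with htzdef
      have hnpos : (0 : ℝ) < n := by exact_mod_cast hn
      have htzpos : 0 < tz := by
        rw [htzdef, Finset.lt_inf'_iff]
        intro i _
        exact div_pos (hts i) (mul_pos hnpos (by linarith [hα i]))
      refine ⟨tz, htzpos, fun t ht => ?_⟩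
      have key : ∑ i : Fin n, ((n : ℝ)⁻¹) • (x - ((n : ℝ) * t * α i) • s i)
          = x - t • (∑ i, α i • s i) := by
        have hn0 : (n : ℝ) ≠ 0 := ne_of_gt hnpos
        simp only [smul_sub, smul_smul]
        rw [Finset.sum_sub_distrib, Finset.sum_const, Finset.card_univ, Fintype.card_fin]
        congr 1
        · rw [← Nat.cast_smul_eq_nsmul ℝ, smul_smul, mul_inv_cancel₀ hn0, one_smul]
        · rw [Finset.smul_sum]
          congr 1
          funext i
          rw [smul_smul]
          congr 1
          field_simp
      rw [← key]
      refine genCone_sum fun i => genCone_smul (by positivity) ?_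
      refine hmem i ((n : ℝ) * t * α i) ⟨mul_nonneg (mul_nonneg hnpos.le ht.1) (hα i), ?_⟩
      have hle : t ≤ ts i / ((n : ℝ) * (α i + 1)) := by
        refine le_trans ht.2 ?_
        rw [htzdef]
        exact Finset.inf'_le _ (Finset.mem_univ i)
      have hpos : (0 : ℝ) < (n : ℝ) * (α i + 1) := mul_pos hnpos (by linarith [hα i])
      have h1 : t * ((n : ℝ) * (α i + 1)) ≤ ts i := by
        rw [← le_div_iff₀ hpos]; exact hle
      nlinarith [hα i, ht.1, hts i]
  obtain ⟨tz, htz, hsub⟩ := hsub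
  refine ⟨tz, htz, fun t ht => ?_⟩
  have heq : x + t • z = (x - t • (∑ i, α i • s i)) + t • y := by
    rw [hz, smul_sub]; abel
  rw [heq]
  exact genCone_add (hsub t ht) (genCone_smul ht.1 hy)
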